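/- Let γ₁, …, γₙ be Hermitian d×d complex matrices with γ_i² = I and γ_i γ_j = −γ_j γ_i for i ≠ j. Index a register of qubits by the 4-element subsets S of {1,…,n}, and let Z_S denote Pauli Z acting on qubit S (tensored with identity on all other qubits). For each 4-element subset S = {j₁ < j₂ < j₃ < j₄}, define O_S := Z_S ⊗ (γ_{j₁} γ_{j₂} γ_{j₃} γ_{j₄}) acting on the tensor product of the qubit register with ℂ^d. Then each O_S is Hermitian, O_S² = I, and for any two 4-element subsets S ≠ T: O_S O_T = (−1)^{|S∩T|} O_T O_S, i.e. O_S and O_T anticommute if S and T agree on an odd number of indices and commute if they agree on an even number of indices. -/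

import Mathlib

open scoped BigOperators

/-- Pauli Z matrix. -/
def pauliZ : Matrix (Fin 2) (Fin 2) ℂ := !![1, 0; 0, -1]

/-- Given Majorana matrices `γ₁,…,γₙ`, a register of qubits indexed by the 4-element
subsets `S` of `{1,…,n}`, and a 4-element subset `S = {j₁ < j₂ < j₃ < j₄}`, the operator
`O_S := Z_S ⊗ (γ_{j₁} γ_{j₂} γ_{j₃} γ_{j₄})` acting on the tensor product of the qubit
register with `ℂ^d`.  Here the qubit register `(ℂ²)^{⊗ register}` is realized as functions
from register sites to `Fin 2`, `Z_S` has `(f, g)` entry the product over sites `T` of the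
entries of `Z` (at site `S`) or the identity (elsewhere), and `⊗` is the Kronecker
product. -/
noncomputable def sykOp {n d : ℕ} (γ : Fin n → Matrix (Fin d) (Fin d) ℂ)
    (S : {S : Finset (Fin n) // S.card = 4}) :
    Matrix (({S : Finset (Fin n) // S.card = 4} → Fin 2) × Fin d)
           (({S : Finset (Fin n) // S.card = 4} → Fin 2) × Fin d) ℂ :=
  Matrix.kroneckerMap (· * ·)
    (Matrix.of fun f g => ∏ T, (if T = S then pauliZ else 1) (f T) (g T))
    (((S.1.sort (· ≤ ·)).map γ).prod)

namespace SykAux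

open Matrix

variable {n d : ℕ} {γ : Fin n → Matrix (Fin d) (Fin d) ℂ}

lemma gmove (hsq : ∀ i, γ i * γ i = 1)
    (hanti : ∀ i j, i ≠ j → γ i * γ j = -(γ j * γ i)) (i : Fin n) :
    ∀ l : List (Fin n), γ i * (l.map γ).prod
      = ((-1 : ℂ) ^ (l.countP fun j => decide (j ≠ i))) • ((l.map γ).prod * γ i)
  | [] => by simp
  | x :: t => by
    have ih := gmove hsq hanti i t
    have hkey : γ i * γ x
        = ((-1 : ℂ) ^ (if x ≠ i then 1 else 0)) • (γ x * γ i) := by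
      by_cases hx : x = i
      · subst hx; simp
      · rw [if_pos hx, pow_one, neg_one_smul]
        exact hanti i x (Ne.symm hx)
    rw [List.map_cons, List.prod_cons, ← mul_assoc, hkey, smul_mul_assoc,
      mul_assoc, ih, mul_smul_comm, smul_smul, ← pow_add, List.countP_cons,
      ← mul_assoc]
    congr 2
    by_cases hx : x = i <;> simp [hx, add_comm]

lemma gswap (hsq : ∀ i, γ i * γ i = 1)
    (hanti : ∀ i j, i ≠ j → γ i * γ j = -(γ j * γ i)) :
    ∀ l₁ l₂ : List (Fin n),
      (l₁.map γ).prod * (l₂.map γ).prod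
        = ((-1 : ℂ) ^ ((l₁.map fun i => l₂.countP fun j => decide (j ≠ i)).sum))
            • ((l₂.map γ).prod * (l₁.map γ).prod)
  | [], l₂ => by simp
  | x :: t, l₂ => by
    have ih := gswap hsq hanti t l₂
    have hm := gmove hsq hanti x l₂
    rw [List.map_cons, List.prod_cons, mul_assoc, ih, mul_smul_comm, ← mul_assoc,
      hm, smul_mul_assoc, smul_smul, ← pow_add, List.map_cons, List.sum_cons,
      mul_assoc]
    congr 2
    exact add_comm _ _

lemma grev (hsq : ∀ i, γ i * γ i = 1)
    (hanti : ∀ i j, i ≠ j → γ i * γ j = -(γ j * γ i)) :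
    ∀ l : List (Fin n), l.Nodup →
      (l.reverse.map γ).prod = ((-1 : ℂ) ^ l.length.choose 2) • (l.map γ).prod
  | [], _ => by simp
  | x :: t, h => by
    obtain ⟨hx, ht⟩ := List.nodup_cons.mp h
    have ih := grev hsq hanti t ht
    have hm := gmove hsq hanti x t
    have hc : (t.countP fun j => decide (j ≠ x)) = t.length := by
      rw [List.countP_eq_length]
      intro a ha
      simp only [ne_eq, decide_eq_true_eq]
      exact fun h' => hx (h' ▸ ha)
    have hm' : (t.map γ).prod * γ x = ((-1 : ℂ) ^ t.length) • (γ x * (t.map γ).prod) := by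
      rw [hm, hc, smul_smul, ← pow_add, ← two_mul, pow_mul]
      norm_num
    calc ((x :: t).reverse.map γ).prod
        = (t.reverse.map γ).prod * γ x := by
          rw [List.reverse_cons, List.map_append, List.prod_append]; simp
      _ = ((-1 : ℂ) ^ t.length.choose 2) • ((t.map γ).prod * γ x) := by
          rw [ih, smul_mul_assoc]
      _ = ((-1 : ℂ) ^ (t.length.choose 2 + t.length)) • (γ x * (t.map γ).prod) := by
          rw [hm', smul_smul, ← pow_add]
      _ = ((-1 : ℂ) ^ ((x :: t).length.choose 2)) • (((x :: t).map γ).prod) := by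
          rw [List.map_cons, List.prod_cons, List.length_cons]
          congr 2
          simp [Nat.choose_succ_succ, Nat.choose_one_right, add_comm]

lemma ginvrev (hsq : ∀ i, γ i * γ i = 1) :
    ∀ l : List (Fin n), (l.map γ).prod * (l.reverse.map γ).prod = 1
  | [] => by simp
  | x :: t => by
    have ih := ginvrev hsq t
    simp only [List.reverse_cons, List.map_append, List.prod_append, List.map_cons,
      List.prod_cons, List.map_nil, List.prod_nil, mul_one]
    calc γ x * (t.map γ).prod * ((t.reverse.map γ).prod * γ x)
        = γ x * ((t.map γ).prod * (t.reverse.map γ).prod) * γ x := by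
          rw [mul_assoc, mul_assoc, mul_assoc]
      _ = 1 := by rw [ih, mul_one, hsq x]

lemma gherm (hHerm : ∀ i, (γ i).IsHermitian) :
    ∀ l : List (Fin n), ((l.map γ).prod)ᴴ = (l.reverse.map γ).prod
  | [] => by simp
  | x :: t => by
    rw [List.map_cons, List.prod_cons, Matrix.conjTranspose_mul, gherm hHerm t,
      (hHerm x).eq, List.reverse_cons, List.map_append, List.prod_append]
    simp

lemma zdiag_sq : ∀ i : Fin 2, pauliZ i i * pauliZ i i = 1 := by
  intro i; fin_cases i <;> simp [pauliZ]

lemma zdiag_star : ∀ i : Fin 2, star (pauliZ i i) = pauliZ i i := by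
  intro i; fin_cases i <;> simp [pauliZ]

lemma zoff : ∀ a b : Fin 2, a ≠ b → pauliZ a b = 0 := by
  intro a b hab; fin_cases a <;> fin_cases b <;> simp_all [pauliZ]

lemma A_diag (S : {S : Finset (Fin n) // S.card = 4}) :
    (Matrix.of fun f g : ({S : Finset (Fin n) // S.card = 4} → Fin 2) =>
        ∏ T, (if T = S then pauliZ else 1) (f T) (g T))
      = Matrix.diagonal (fun f => pauliZ (f S) (f S)) := by
  ext f g
  by_cases hfg : f = g
  · subst hfg
    rw [Matrix.of_apply, Matrix.diagonal_apply_eq]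
    rw [Finset.prod_eq_single S (fun T _ hT => by simp [hT, Matrix.one_apply_eq])
      (fun h => absurd (Finset.mem_univ S) h)]
    simp
  · rw [Matrix.of_apply, Matrix.diagonal_apply_ne _ hfg]
    obtain ⟨T₀, hT₀⟩ := Function.ne_iff.mp hfg
    apply Finset.prod_eq_zero (Finset.mem_univ T₀)
    by_cases h : T₀ = S
    · rw [if_pos h]; exact zoff _ _ hT₀
    · rw [if_neg h]; exact Matrix.one_apply_ne hT₀

lemma sum_ite34 {α : Type*} (p : α → Prop) [DecidablePred p] :
    ∀ l : List α,
      (l.map fun i => if p i then 3 else 4).sum + l.countP (fun i => decide (p i))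
        = 4 * l.length
  | [] => by simp
  | x :: t => by
    have ih := sum_ite34 p t
    by_cases hx : p x <;>
      simp [hx, List.countP_cons, List.length_cons, Nat.mul_succ] <;> omega

end SykAux

open SykAux Matrix

theorem stmt11 {n d : ℕ} (γ : Fin n → Matrix (Fin d) (Fin d) ℂ)
    (hHerm : ∀ i, (γ i).IsHermitian) (hsq : ∀ i, γ i * γ i = 1)
    (hanti : ∀ i j, i ≠ j → γ i * γ j = -(γ j * γ i)) :
    (∀ S, (sykOp γ S).IsHermitian) ∧
    (∀ S, sykOp γ S * sykOp γ S = 1) ∧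
    (∀ S T, S ≠ T →
      sykOp γ S * sykOp γ T
        = ((-1 : ℂ) ^ (S.1 ∩ T.1).card) • (sykOp γ T * sykOp γ S)) := by
  classical
  -- notation
  set idx := {S : Finset (Fin n) // S.card = 4} with hidx
  have hop : ∀ S : idx, sykOp γ S
      = Matrix.kroneckerMap (· * ·)
          (Matrix.diagonal (fun f : idx → Fin 2 => pauliZ (f S) (f S)))
          (((S.1.sort (· ≤ ·)).map γ).prod) := by
    intro S; rw [sykOp, A_diag]
  have hlen : ∀ S : idx, (S.1.sort (· ≤ ·)).length = 4 := by
    intro S; rw [Finset.length_sort]; exact S.2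
  have hGrev : ∀ S : idx,
      ((S.1.sort (· ≤ ·)).reverse.map γ).prod = ((S.1.sort (· ≤ ·)).map γ).prod := by
    intro S
    rw [grev hsq hanti _ (Finset.sort_nodup _ _), hlen]
    have h6 : Nat.choose 4 2 = 6 := rfl
    rw [h6]
    norm_num
  have hGH : ∀ S : idx,
      (((S.1.sort (· ≤ ·)).map γ).prod)ᴴ = ((S.1.sort (· ≤ ·)).map γ).prod := by
    intro S; rw [gherm hHerm, hGrev]
  have hGsq : ∀ S : idx,
      ((S.1.sort (· ≤ ·)).map γ).prod * ((S.1.sort (· ≤ ·)).map γ).prod = 1 := by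
    intro S
    nth_rewrite 2 [← hGrev S]
    exact ginvrev hsq _
  -- diagonal matrices
  have hAH : ∀ S : idx,
      (Matrix.diagonal (fun f : idx → Fin 2 => pauliZ (f S) (f S)))ᴴ
        = Matrix.diagonal (fun f : idx → Fin 2 => pauliZ (f S) (f S)) := by
    intro S
    rw [Matrix.diagonal_conjTranspose]
    refine congrArg Matrix.diagonal (funext fun f => ?_)
    simp only [Pi.star_apply]
    exact zdiag_star _
  have hAsq : ∀ S : idx,
      Matrix.diagonal (fun f : idx → Fin 2 => pauliZ (f S) (f S))
        * Matrix.diagonal (fun f : idx → Fin 2 => pauliZ (f S) (f S)) = 1 := by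
    intro S
    rw [Matrix.diagonal_mul_diagonal, ← Matrix.diagonal_one]
    refine congrArg Matrix.diagonal (funext fun f => ?_)
    exact zdiag_sq _
  have hAcomm : ∀ S T : idx,
      Matrix.diagonal (fun f : idx → Fin 2 => pauliZ (f S) (f S))
          * Matrix.diagonal (fun f : idx → Fin 2 => pauliZ (f T) (f T))
        = Matrix.diagonal (fun f : idx → Fin 2 => pauliZ (f T) (f T))
          * Matrix.diagonal (fun f : idx → Fin 2 => pauliZ (f S) (f S)) := by
    intro S T
    rw [Matrix.diagonal_mul_diagonal, Matrix.diagonal_mul_diagonal]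
    exact congrArg Matrix.diagonal (mul_comm _ _)
  -- Hermiticity of a Kronecker product of Hermitian matrices
  have hkronH : ∀ (A : Matrix (idx → Fin 2) (idx → Fin 2) ℂ)
      (B : Matrix (Fin d) (Fin d) ℂ), Aᴴ = A → Bᴴ = B →
      (Matrix.kroneckerMap (· * ·) A B)ᴴ = Matrix.kroneckerMap (· * ·) A B := by
    intro A B hA hB
    ext ⟨f, i⟩ ⟨g, j⟩
    rw [Matrix.conjTranspose_apply, Matrix.kroneckerMap_apply,
      Matrix.kroneckerMap_apply, star_mul', ← Matrix.conjTranspose_apply A,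
      ← Matrix.conjTranspose_apply B, hA, hB]
  refine ⟨?_, ?_, ?_⟩
  · intro S
    show (sykOp γ S)ᴴ = sykOp γ S
    rw [hop S]
    exact hkronH _ _ (hAH S) (hGH S)
  · intro S
    rw [hop S, ← Matrix.mul_kronecker_mul, hAsq S, hGsq S, Matrix.one_kronecker_one]
  · intro S T _
    -- the sign for the gamma parts
    set l₁ := S.1.sort (· ≤ ·) with hl₁
    set l₂ := T.1.sort (· ≤ ·) with hl₂
    clear_value l₁ l₂
    have hcount : ∀ i, (l₂.countP fun j => decide (j ≠ i))
        = if i ∈ T.1 then 3 else 4 := by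
      intro i
      have h1 := List.length_eq_countP_add_countP (p := fun j => decide (j = i)) (l := l₂)
      have hpred : (fun a : Fin n => decide ¬(decide (a = i) = true))
          = fun j => decide (j ≠ i) := by
        funext j; by_cases h : j = i <;> simp [h]
      rw [hpred] at h1
      have h2 : l₂.countP (fun j => decide (j = i)) = if i ∈ T.1 then 1 else 0 := by
        have hcnt : (l₂.countP fun j => decide (j = i)) = l₂.count i := rfl
        rw [hcnt]
        by_cases hi : i ∈ T.1
        · rw [if_pos hi, hl₂]
          exact List.count_eq_one_of_mem (Finset.sort_nodup _ _)
            ((Finset.mem_sort _).mpr hi)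
        · rw [if_neg hi, hl₂]
          exact List.count_eq_zero_of_not_mem
            (fun h => hi ((Finset.mem_sort _).mp h))
      have h3 : l₂.length = 4 := by rw [hl₂]; exact hlen T
      by_cases hi : i ∈ T.1
      · rw [if_pos hi] at h2 ⊢
        omega
      · rw [if_neg hi] at h2 ⊢
        omega
    have hk : (l₁.countP fun i => decide (i ∈ T.1)) = (S.1 ∩ T.1).card := by
      rw [List.countP_eq_length_filter]
      have hnd : (l₁.filter fun i => decide (i ∈ T.1)).Nodup := by
        rw [hl₁]; exact (Finset.sort_nodup _ _).filter _
      rw [← List.toFinset_card_of_nodup hnd, List.toFinset_filter, hl₁,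
        Finset.sort_toFinset]
      congr 1
      ext a
      simp [Finset.mem_filter, Finset.mem_inter]
    have hsum : ((l₁.map fun i => l₂.countP fun j => decide (j ≠ i)).sum)
        + (S.1 ∩ T.1).card = 16 := by
      have : (l₁.map fun i => l₂.countP fun j => decide (j ≠ i))
          = l₁.map fun i => if i ∈ T.1 then 3 else 4 := by
        apply List.map_congr_left
        intro i _
        exact hcount i
      rw [this, ← hk]
      have h34 := sum_ite34 (fun i => i ∈ T.1) l₁
      have hlen1 : l₁.length = 4 := by rw [hl₁]; exact hlen S
      rw [h34, hlen1]
    have hsign : ((-1 : ℂ) ^ ((l₁.map fun i => l₂.countP fun j => decide (j ≠ i)).sum))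
        = (-1 : ℂ) ^ (S.1 ∩ T.1).card := by
      set e := (l₁.map fun i => l₂.countP fun j => decide (j ≠ i)).sum
      set c := (S.1 ∩ T.1).card
      have h2 : (-1 : ℂ) ^ c * (-1 : ℂ) ^ c = 1 := by
        rw [← pow_add, ← two_mul, pow_mul]; norm_num
      calc (-1 : ℂ) ^ e = (-1 : ℂ) ^ e * ((-1 : ℂ) ^ c * (-1 : ℂ) ^ c) := by
            rw [h2, mul_one]
        _ = ((-1 : ℂ) ^ (e + c)) * (-1 : ℂ) ^ c := by rw [pow_add]; ring
        _ = (-1 : ℂ) ^ c := by rw [hsum]; norm_num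
    have hGswap : ((l₁.map γ).prod) * ((l₂.map γ).prod)
        = ((-1 : ℂ) ^ (S.1 ∩ T.1).card) • (((l₂.map γ).prod) * ((l₁.map γ).prod)) := by
      rw [gswap hsq hanti, hsign]
    rw [hop S, hop T, ← Matrix.mul_kronecker_mul, ← Matrix.mul_kronecker_mul,
      hAcomm S T, ← hl₁, ← hl₂, hGswap, Matrix.kronecker_smul]
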